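/- Assume f is curved and let τ' > 0. For every u* ∈ ∂C(0), writing u^c = Σ_{j∈J(u*)} u*_j ψ_j (where u* = Σ_{i∈I} u*_i ψ_i), the set SSAT({u*},(0,τ']) is nonempty, bounded, and equals the translate (u* − u^c) + SSAT({u^c},(0,τ']). -/

import Mathlib

open MeasureTheory Filter Set
open scoped Classical

noncomputable section

/-- The ambient space `ℝ^N` with the Euclidean structure. -/
abbrev Euc (N : ℕ) := EuclideanSpace ℝ (Fin N)

variable {N : ℕ}

/-- The cell `C((k_i))` : points whose coordinates in the basis `ψ` satisfy
`τ(k_i - 1/2) ≤ u_i ≤ τ(k_i + 1/2)`. -/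
def cube (ψ : Module.Basis (Fin N) ℝ (Euc N)) (τ : ℝ) (k : Fin N → ℤ) : Set (Euc N) :=
  {u | ∀ i, τ * ((k i : ℝ) - 1/2) ≤ ψ.repr u i ∧ ψ.repr u i ≤ τ * ((k i : ℝ) + 1/2)}

/-- The central cell `C(0)`. -/
def cube0 (ψ : Module.Basis (Fin N) ℝ (Euc N)) (τ : ℝ) : Set (Euc N) := cube ψ τ 0

/-- The set of active (saturated) coordinates `J(u)` for `u ∈ C(0)`. -/
def Jset (ψ : Module.Basis (Fin N) ℝ (Euc N)) (τ : ℝ) (u : Euc N) : Set (Fin N) :=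
  {i | ψ.repr u i = τ / 2 ∨ ψ.repr u i = -(τ / 2)}

/-- `sol` is the solution map of the problems `(P)(u)` : `sol u` minimizes `f(v - u)` over
`C(0)`.  (Under the hypotheses on `f` the minimizer is unique.) -/
def IsSol (ψ : Module.Basis (Fin N) ℝ (Euc N)) (τ : ℝ) (f : Euc N → ℝ) (sol : Euc N → Euc N) : Prop :=
  ∀ u, sol u ∈ cube0 ψ τ ∧ IsMinOn (fun v => f (v - u)) (cube0 ψ τ) (sol u)

/-- `SSAT(C, A)` : the set of data `u` whose solution `sol u` lies in `C` and with
`f_d(u - sol u) ∈ A`. -/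
def SSAT (sol : Euc N → Euc N) (fd : Euc N → ℝ) (C : Set (Euc N)) (A : Set ℝ) : Set (Euc N) :=
  {u | sol u ∈ C ∧ fd (u - sol u) ∈ A}

/-- `f` is a norm. -/
structure IsNormLike (f : Euc N → ℝ) : Prop where
  add_le : ∀ x y, f (x + y) ≤ f x + f y
  smul_eq : ∀ (c : ℝ) (x), f (c • x) = |c| * f x
  eq_zero_iff : ∀ x, f x = 0 ↔ x = 0

/-- `f` is a norm, continuously differentiable away from `0`, with strictly convex
level sets. -/
structure GoodNorm (f : Euc N → ℝ) : Prop where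
  add_le : ∀ x y, f (x + y) ≤ f x + f y
  smul_eq : ∀ (c : ℝ) (x), f (c • x) = |c| * f x
  eq_zero_iff : ∀ x, f x = 0 ↔ x = 0
  smooth : ∀ x : Euc N, x ≠ 0 → ContDiffAt ℝ 1 f x
  sconv : StrictConvex ℝ {x : Euc N | f x ≤ 1}

/-- `f` is curved : the normalized-gradient map `h : {f = 1} → S^{N-1}`,
`h(u) = ∇f(u)/‖∇f(u)‖₂`, is a bijection whose inverse is Lipschitz. -/
def Curved (f : Euc N → ℝ) : Prop :=
  ∃ (L : NNReal) (g : Euc N → Euc N),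
    LipschitzOnWith L g (Metric.sphere (0 : Euc N) 1) ∧
    (∀ u : Euc N, f u = 1 → g (‖gradient f u‖⁻¹ • gradient f u) = u) ∧
    ∀ w ∈ Metric.sphere (0 : Euc N) 1, ∃ u, f u = 1 ∧ ‖gradient f u‖⁻¹ • gradient f u = w

/-- The projection `p` onto `Span(ψ_j : j ∈ J)` along the other basis vectors. -/
def pJ (ψ : Module.Basis (Fin N) ℝ (Euc N)) (J : Set (Fin N)) (x : Euc N) : Euc N :=
  ∑ j : Fin N, if j ∈ J then ψ.repr x j • ψ j else 0

/-- The "center" `u^c` of the face of `u` : keep the saturated coordinates, zero out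
the others. -/
def ucOf (ψ : Module.Basis (Fin N) ℝ (Euc N)) (τ : ℝ) (u : Euc N) : Euc N :=
  pJ ψ (Jset ψ τ u) u

/-- The equivalence class `ū` of `u` in `C(0)` : same active set. -/
def ubar (ψ : Module.Basis (Fin N) ℝ (Euc N)) (τ : ℝ) (u : Euc N) : Set (Euc N) :=
  {w ∈ cube0 ψ τ | Jset ψ τ w = Jset ψ τ u}

/-- The discrete grid `D = τ ℤ^N` (in the basis `ψ`). -/
def Dgrid (ψ : Module.Basis (Fin N) ℝ (Euc N)) (τ : ℝ) : Set (Euc N) :=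
  {x | ∃ k : Fin N → ℤ, x = ∑ i, (τ * (k i : ℝ)) • ψ i}

/-- The slice `Dom((k_j)_{j∈J})` of the grid : grid points whose `J`-coordinates are
the prescribed `τ k_j`. -/
def DomSlice (ψ : Module.Basis (Fin N) ℝ (Euc N)) (τ : ℝ) (J : Set (Fin N)) (k : Fin N → ℤ) :
    Set (Euc N) :=
  {x ∈ Dgrid ψ τ | ∀ j ∈ J, ψ.repr x j = τ * (k j : ℝ)}

/-- The grid `τ ℤ^J` inside `Span(ψ_j : j ∈ J)`. -/
def JgridJ (ψ : Module.Basis (Fin N) ℝ (Euc N)) (τ : ℝ) (J : Set (Fin N)) : Set (Euc N) :=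
  {x | ∃ k : Fin N → ℤ, x = ∑ j : Fin N, if j ∈ J then (τ * (k j : ℝ)) • ψ j else 0}

/-- `Leb_K(S)` : the Lebesgue measure (in `ℝ^{#J}`) of the set of `J`-indexed coordinate
families whose combination lies in `S`. -/
def lebJ (ψ : Module.Basis (Fin N) ℝ (Euc N)) (J : Set (Fin N)) (S : Set (Euc N)) : ENNReal :=
  volume {a : ↥J → ℝ | (∑ j : ↥J, a j • ψ (j : Fin N)) ∈ S}

/-- The set `C_K` of centers of the faces of codimension `K`. -/
def CKset (ψ : Module.Basis (Fin N) ℝ (Euc N)) (τ : ℝ) (K : ℕ) : Set (Euc N) :=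
  {x | ∃ (J : Set (Fin N)) (ε : Fin N → ℝ), J.ncard = K ∧ (∀ j ∈ J, ε j = 1 ∨ ε j = -1) ∧
    x = ∑ j : Fin N, if j ∈ J then (ε j * (τ / 2)) • ψ j else 0}

/-- The set `Cl_K` of boundary points of `C(0)` with exactly `K` active constraints. -/
def ClKset (ψ : Module.Basis (Fin N) ℝ (Euc N)) (τ : ℝ) (K : ℕ) : Set (Euc N) :=
  {u | u ∈ frontier (cube0 ψ τ) ∧ (Jset ψ τ u).ncard = K}

/-- `k_i(u)` : the unique integer with `τ(k_i - 1/2) ≤ u_i < τ(k_i + 1/2)`. -/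
def kfun (ψ : Module.Basis (Fin N) ℝ (Euc N)) (τ : ℝ) (u : Euc N) (i : Fin N) : ℤ :=
  ⌊ψ.repr u i / τ + 1 / 2⌋

/-- The grid point `τ Σ k_i(u) ψ_i` approximating `u`. -/
def gridpt (ψ : Module.Basis (Fin N) ℝ (Euc N)) (τ : ℝ) (u : Euc N) : Euc N :=
  ∑ i, (τ * (kfun ψ τ u i : ℝ)) • ψ i

/-- `J̃(u)` : the active set of the solution of `(P)` at the grid point of `u`. -/
def Jtil (ψ : Module.Basis (Fin N) ℝ (Euc N)) (τ : ℝ) (sol : Euc N → Euc N) (u : Euc N) :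
    Set (Fin N) :=
  Jset ψ τ (sol (gridpt ψ τ u))


section AuxProofs

variable {N : ℕ}

lemma nlZero {f : Euc N → ℝ} (h0 : ∀ (c : ℝ) (x : Euc N), f (c • x) = |c| * f x) : f 0 = 0 := by
  have := h0 0 0; simpa using this

lemma nlNeg {f : Euc N → ℝ} (h0 : ∀ (c : ℝ) (x : Euc N), f (c • x) = |c| * f x) (x : Euc N) :
    f (-x) = f x := by
  have := h0 (-1) x; simpa using this

lemma nlNonneg {f : Euc N → ℝ} (hadd : ∀ x y, f (x + y) ≤ f x + f y)
    (h0 : ∀ (c : ℝ) (x : Euc N), f (c • x) = |c| * f x) (x : Euc N) : 0 ≤ f x := by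
  have h1 : f 0 ≤ f x + f (-x) := by simpa using hadd x (-x)
  rw [nlZero h0, nlNeg h0] at h1; linarith

lemma nlSumLe {f : Euc N → ℝ} (hadd : ∀ x y, f (x + y) ≤ f x + f y)
    (h0 : ∀ (c : ℝ) (x : Euc N), f (c • x) = |c| * f x)
    {ι : Type*} (s : Finset ι) (g : ι → Euc N) :
    f (∑ i ∈ s, g i) ≤ ∑ i ∈ s, f (g i) := by
  classical
  induction s using Finset.cons_induction with
  | empty => simp [nlZero h0]
  | cons a s ha ih =>
    rw [Finset.sum_cons, Finset.sum_cons]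
    exact le_trans (hadd _ _) (by linarith)

lemma nlUpper (ψ : Module.Basis (Fin N) ℝ (Euc N)) {f : Euc N → ℝ}
    (hadd : ∀ x y, f (x + y) ≤ f x + f y)
    (h0 : ∀ (c : ℝ) (x : Euc N), f (c • x) = |c| * f x) :
    ∃ C > 0, ∀ x, f x ≤ C * ‖x‖ := by
  classical
  set K : Fin N → ℝ := fun i => ‖LinearMap.toContinuousLinearMap (ψ.coord i)‖ with hK
  have hsum_nonneg : 0 ≤ ∑ i, f (ψ i) * K i :=
    Finset.sum_nonneg fun i _ => mul_nonneg (nlNonneg hadd h0 _) (norm_nonneg _)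
  refine ⟨(∑ i, f (ψ i) * K i) + 1, by linarith, fun x => ?_⟩
  have hx : x = ∑ i, ψ.repr x i • ψ i := (ψ.sum_repr x).symm
  have h1 : f x ≤ ∑ i, f (ψ.repr x i • ψ i) := by
    conv_lhs => rw [hx]
    exact nlSumLe hadd h0 _ _
  have h2 : ∀ i, f (ψ.repr x i • ψ i) ≤ f (ψ i) * K i * ‖x‖ := by
    intro i
    rw [h0]
    have hle : |ψ.repr x i| ≤ K i * ‖x‖ := by
      have := (LinearMap.toContinuousLinearMap (ψ.coord i)).le_opNorm x
      simpa [hK, Real.norm_eq_abs] using this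
    calc |ψ.repr x i| * f (ψ i) ≤ (K i * ‖x‖) * f (ψ i) :=
          mul_le_mul_of_nonneg_right hle (nlNonneg hadd h0 _)
      _ = f (ψ i) * K i * ‖x‖ := by ring
  calc f x ≤ ∑ i, f (ψ.repr x i • ψ i) := h1
    _ ≤ ∑ i, f (ψ i) * K i * ‖x‖ := Finset.sum_le_sum fun i _ => h2 i
    _ = (∑ i, f (ψ i) * K i) * ‖x‖ := by rw [Finset.sum_mul]
    _ ≤ ((∑ i, f (ψ i) * K i) + 1) * ‖x‖ := by
        have := norm_nonneg x; nlinarith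

lemma nlContinuous (ψ : Module.Basis (Fin N) ℝ (Euc N)) {f : Euc N → ℝ}
    (hadd : ∀ x y, f (x + y) ≤ f x + f y)
    (h0 : ∀ (c : ℝ) (x : Euc N), f (c • x) = |c| * f x) : Continuous f := by
  obtain ⟨C, hC, hCle⟩ := nlUpper ψ hadd h0
  rw [Metric.continuous_iff]
  intro x ε hε
  refine ⟨ε / C, by positivity, fun y hy => ?_⟩
  have key : ∀ a b : Euc N, f a - f b ≤ C * ‖a - b‖ := by
    intro a b
    have := hadd b (a - b)
    simp only [add_sub_cancel] at this
    have := hCle (a - b)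
    linarith
  have h1 : f y - f x ≤ C * ‖y - x‖ := key y x
  have h2 : f x - f y ≤ C * ‖x - y‖ := key x y
  rw [Real.dist_eq, abs_sub_lt_iff]
  rw [dist_eq_norm] at hy
  have h3 : C * ‖y - x‖ < C * (ε / C) := by
    exact mul_lt_mul_of_pos_left hy hC
  rw [mul_div_cancel₀ _ (ne_of_gt hC)] at h3
  have h4 : ‖x - y‖ = ‖y - x‖ := norm_sub_rev x y
  constructor <;> nlinarith

lemma nlLower (hN : 1 ≤ N) (ψ : Module.Basis (Fin N) ℝ (Euc N)) {f : Euc N → ℝ}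
    (hadd : ∀ x y, f (x + y) ≤ f x + f y)
    (h0 : ∀ (c : ℝ) (x : Euc N), f (c • x) = |c| * f x)
    (hz : ∀ x : Euc N, f x = 0 ↔ x = 0) :
    ∃ c > 0, ∀ x, c * ‖x‖ ≤ f x := by
  haveI : Nonempty (Fin N) := ⟨⟨0, hN⟩⟩
  haveI : Nontrivial (Euc N) := inferInstance
  have hsph : (Metric.sphere (0 : Euc N) 1).Nonempty :=
    NormedSpace.sphere_nonempty.mpr zero_le_one
  obtain ⟨z, hz1, hz2⟩ := (isCompact_sphere (0 : Euc N) 1).exists_isMinOn hsph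
    ((nlContinuous ψ hadd h0).continuousOn)
  have hzne : z ≠ 0 := by
    intro h
    rw [Metric.mem_sphere, dist_zero_right] at hz1
    rw [h] at hz1; simp at hz1
  have hfz : 0 < f z := by
    rcases lt_or_eq_of_le (nlNonneg hadd h0 z) with h | h
    · exact h
    · exact absurd ((hz z).mp h.symm) hzne
  refine ⟨f z, hfz, fun x => ?_⟩
  rcases eq_or_ne x 0 with rfl | hx
  · simp [nlZero h0]
  · have hnx : (0:ℝ) < ‖x‖ := norm_pos_iff.mpr hx
    have hmem : ‖x‖⁻¹ • x ∈ Metric.sphere (0 : Euc N) 1 := by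
      rw [Metric.mem_sphere, dist_zero_right, norm_smul]
      simp [abs_of_pos (inv_pos.mpr hnx), inv_mul_cancel₀ (ne_of_gt hnx)]
    have heq : f (‖x‖⁻¹ • x) = ‖x‖⁻¹ * f x := by
      rw [h0]; congr 1; exact abs_of_pos (inv_pos.mpr hnx)
    have h5 : f z ≤ ‖x‖⁻¹ * f x := by
      have := hz2 hmem; simpa [heq] using this
    calc f z * ‖x‖ ≤ (‖x‖⁻¹ * f x) * ‖x‖ := mul_le_mul_of_nonneg_right h5 hnx.le
      _ = f x := by field_simp

lemma coordContinuous (ψ : Module.Basis (Fin N) ℝ (Euc N)) (i : Fin N) :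
    Continuous fun u : Euc N => ψ.repr u i := by
  have : Continuous (ψ.coord i) := (ψ.coord i).continuous_of_finiteDimensional
  exact this

lemma cube0Closed (ψ : Module.Basis (Fin N) ℝ (Euc N)) (τ : ℝ) : IsClosed (cube0 ψ τ) := by
  have : cube0 ψ τ = ⋂ i, {u : Euc N | τ * ((0:ℝ) - 1/2) ≤ ψ.repr u i ∧
      ψ.repr u i ≤ τ * ((0:ℝ) + 1/2)} := by
    ext u; simp [cube0, cube]
  rw [this]
  exact isClosed_iInter fun i =>
    IsClosed.inter (isClosed_le continuous_const (coordContinuous ψ i))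
      (isClosed_le (coordContinuous ψ i) continuous_const)

lemma cube0_mem_iff (ψ : Module.Basis (Fin N) ℝ (Euc N)) (τ : ℝ) (u : Euc N) :
    u ∈ cube0 ψ τ ↔ ∀ i, -(τ/2) ≤ ψ.repr u i ∧ ψ.repr u i ≤ τ/2 := by
  unfold cube0 cube
  simp only [Set.mem_setOf_eq, Pi.zero_apply, Int.cast_zero, zero_sub, zero_add]
  constructor
  · intro h i; have := h i; constructor <;> linarith [this.1, this.2]
  · intro h i; have := h i; constructor <;> linarith [this.1, this.2]

lemma cube0Convex (ψ : Module.Basis (Fin N) ℝ (Euc N)) (τ : ℝ) : Convex ℝ (cube0 ψ τ) := by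
  intro x hx y hy a b ha hb hab
  rw [cube0_mem_iff] at hx hy ⊢
  intro i
  have hxi := hx i; have hyi := hy i
  have hrep : ψ.repr (a • x + b • y) i = a * ψ.repr x i + b * ψ.repr y i := by
    simp [map_add, _root_.map_smul]
  rw [hrep]
  constructor <;> nlinarith [hxi.1, hxi.2, hyi.1, hyi.2]

/-- The solution of (P)(u) is unique. -/
lemma solUnique (ψ : Module.Basis (Fin N) ℝ (Euc N)) (τ : ℝ) {f : Euc N → ℝ} (hf : GoodNorm f)
    {u v1 v2 : Euc N} (hv1 : v1 ∈ cube0 ψ τ) (hv2 : v2 ∈ cube0 ψ τ)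
    (h1 : IsMinOn (fun v => f (v - u)) (cube0 ψ τ) v1)
    (h2 : IsMinOn (fun v => f (v - u)) (cube0 ψ τ) v2) : v1 = v2 := by
  have hm : f (v1 - u) = f (v2 - u) :=
    le_antisymm (isMinOn_iff.mp h1 _ hv2) (isMinOn_iff.mp h2 _ hv1)
  set m := f (v1 - u) with hmdef
  have hm0 : 0 ≤ m := nlNonneg hf.add_le hf.smul_eq _
  rcases eq_or_lt_of_le hm0 with h | h
  · have e1 : v1 - u = 0 := (hf.eq_zero_iff _).mp h.symm
    have e2 : v2 - u = 0 := (hf.eq_zero_iff _).mp (hm ▸ h.symm : f (v2 - u) = 0).symm.symm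
    have := sub_eq_zero.mp e1
    have := sub_eq_zero.mp e2
    simp_all
  · by_contra hne
    set x := m⁻¹ • (v1 - u) with hxdef
    set y := m⁻¹ • (v2 - u) with hydef
    have hminv : (0:ℝ) < m⁻¹ := inv_pos.mpr h
    have hfx : f x = 1 := by
      rw [hxdef, hf.smul_eq, abs_of_pos hminv, ← hmdef, inv_mul_cancel₀ (ne_of_gt h)]
    have hfy : f y = 1 := by
      rw [hydef, hf.smul_eq, abs_of_pos hminv, ← hm, inv_mul_cancel₀ (ne_of_gt h)]
    have hxy : x ≠ y := by
      intro hcontra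
      apply hne
      have := smul_right_injective (Euc N) (ne_of_gt hminv) hcontra
      have h12 : v1 - u = v2 - u := this
      exact sub_left_injective h12
    have hmemx : x ∈ {w : Euc N | f w ≤ 1} := by simp [hfx]
    have hmemy : y ∈ {w : Euc N | f w ≤ 1} := by simp [hfy]
    have hmid := hf.sconv hmemx hmemy hxy (by norm_num : (0:ℝ) < 1/2)
      (by norm_num : (0:ℝ) < 1/2) (by norm_num)
    -- interior of the unit ball consists of points with f < 1
    have hint : ∀ w : Euc N, w ∈ interior {z : Euc N | f z ≤ 1} → f w < 1 := by
      intro w hw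
      have hwle : f w ≤ 1 := by have := interior_subset hw; simpa using this
      rcases lt_or_eq_of_le hwle with hlt | heq
      · exact hlt
      · exfalso
        obtain ⟨ε, hε, hball⟩ := Metric.isOpen_iff.mp isOpen_interior w hw
        have hwne : w ≠ 0 := by
          intro h0; rw [h0, nlZero hf.smul_eq] at heq; norm_num at heq
        have hnw : (0:ℝ) < ‖w‖ := norm_pos_iff.mpr hwne
        set δ := ε / (2 * ‖w‖) with hδdef
        have hδ : 0 < δ := by positivity
        have hmem2 : (1 + δ) • w ∈ Metric.ball w ε := by
          rw [Metric.mem_ball, dist_eq_norm]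
          have : (1 + δ) • w - w = δ • w := by
            rw [add_smul, one_smul]; abel
          rw [this, norm_smul, Real.norm_eq_abs, abs_of_pos hδ, hδdef]
          rw [div_mul_eq_mul_div]
          rw [div_lt_iff₀ (by positivity)]
          nlinarith
        have hmem3 : (1 + δ) • w ∈ {z : Euc N | f z ≤ 1} :=
          interior_subset (hball hmem2)
        simp only [Set.mem_setOf_eq] at hmem3
        have heq2 : f ((1 + δ) • w) = (1 + δ) * f w := by
          rw [hf.smul_eq, abs_of_pos (by linarith)]
        rw [heq2, heq] at hmem3
        nlinarith
    have hflt := hint _ hmid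
    -- midpoint of v1 v2
    have hmidpt : (1/2 : ℝ) • x + (1/2 : ℝ) • y = m⁻¹ • ((1/2 : ℝ) • v1 + (1/2 : ℝ) • v2 - u) := by
      rw [hxdef, hydef]; module
    have hmemmid : (1/2 : ℝ) • v1 + (1/2 : ℝ) • v2 ∈ cube0 ψ τ :=
      cube0Convex ψ τ hv1 hv2 (by norm_num) (by norm_num) (by norm_num)
    have hmin : f (v1 - u) ≤ f ((1/2 : ℝ) • v1 + (1/2 : ℝ) • v2 - u) :=
      isMinOn_iff.mp h1 _ hmemmid
    rw [← hmdef] at hmin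
    have hcalc : f ((1/2 : ℝ) • v1 + (1/2 : ℝ) • v2 - u) = m * f ((1/2:ℝ) • x + (1/2:ℝ) • y) := by
      rw [hmidpt, hf.smul_eq, abs_of_pos hminv, ← mul_assoc, mul_inv_cancel₀ (ne_of_gt h), one_mul]
    rw [hcalc] at hmin
    nlinarith

/-- Any point of the cube is its own solution. -/
lemma solFixed (ψ : Module.Basis (Fin N) ℝ (Euc N)) (τ : ℝ) {f : Euc N → ℝ} (hf : GoodNorm f)
    {sol : Euc N → Euc N} (hsol : IsSol ψ τ f sol) {q : Euc N} (hq : q ∈ cube0 ψ τ) :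
    sol q = q := by
  have h1 : f (sol q - q) ≤ f (q - q) := isMinOn_iff.mp (hsol q).2 _ hq
  simp only [sub_self, nlZero hf.smul_eq] at h1
  have h2 : 0 ≤ f (sol q - q) := nlNonneg hf.add_le hf.smul_eq _
  have h3 : f (sol q - q) = 0 := le_antisymm h1 h2
  have := (hf.eq_zero_iff _).mp h3
  exact sub_eq_zero.mp this

/-- Key translation lemma. -/
lemma solTranslate (ψ : Module.Basis (Fin N) ℝ (Euc N)) {τ : ℝ} (hτ : 0 < τ) {f : Euc N → ℝ}
    (hf : GoodNorm f) {sol : Euc N → Euc N} (hsol : IsSol ψ τ f sol)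
    {p q u : Euc N} (hq : q ∈ cube0 ψ τ) (hpu : sol u = p)
    (he : ∀ j ∈ Jset ψ τ p, ψ.repr (q - p) j = 0) :
    sol (u + (q - p)) = q := by
  have hp : p ∈ cube0 ψ τ := hpu ▸ (hsol u).1
  have hmin : IsMinOn (fun v => f (v - u)) (cube0 ψ τ) p := hpu ▸ (hsol u).2
  set m := f (p - u) with hmdef
  have hm0 : 0 ≤ m := nlNonneg hf.add_le hf.smul_eq _
  have fcont : Continuous f := nlContinuous ψ hf.add_le hf.smul_eq
  -- main claim: q minimizes f(· - (u + (q - p))) on cube0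
  have hqmin : IsMinOn (fun v => f (v - (u + (q - p)))) (cube0 ψ τ) q := by
    rw [isMinOn_iff]
    rcases eq_or_lt_of_le hm0 with hm | hm
    · -- m = 0 : trivial, all values ≥ 0 = value at q
      intro v hv
      show f (q - (u + (q - p))) ≤ f (v - (u + (q - p)))
      have heq0 : q - (u + (q - p)) = p - u := by abel
      rw [heq0, ← hmdef, ← hm]
      exact nlNonneg hf.add_le hf.smul_eq _
    · -- m > 0 : separation
      set s := {x : Euc N | f (x - u) < m} with hsdef
      have hsopen : IsOpen s := by
        have : Continuous fun x : Euc N => f (x - u) := fcont.comp (continuous_sub_right u)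
        exact isOpen_lt this continuous_const
      have hsconv : Convex ℝ s := by
        intro x hx y hy a b ha hb hab
        simp only [hsdef, Set.mem_setOf_eq] at hx hy ⊢
        have h1 : a • u + b • u = u := by rw [← add_smul, hab, one_smul]
        have heq : a • x + b • y - u = a • (x - u) + b • (y - u) := by
          calc a • x + b • y - u = a • x + b • y - (a • u + b • u) := by rw [h1]
            _ = a • (x - u) + b • (y - u) := by module
        rw [heq]
        have hstep : f (a • (x - u) + b • (y - u)) ≤ a * f (x - u) + b * f (y - u) := by
          calc f (a • (x - u) + b • (y - u)) ≤ f (a • (x - u)) + f (b • (y - u)) :=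
                hf.add_le _ _
            _ = a * f (x - u) + b * f (y - u) := by
                rw [hf.smul_eq, hf.smul_eq, abs_of_nonneg ha, abs_of_nonneg hb]
        rcases eq_or_lt_of_le ha with ha' | ha'
        · have hb1 : b = 1 := by linarith
          have : a * f (x - u) + b * f (y - u) = f (y - u) := by rw [← ha', hb1]; ring
          linarith
        · have t1 : a * f (x - u) < a * m := mul_lt_mul_of_pos_left hx ha'
          have t2 : b * f (y - u) ≤ b * m := mul_le_mul_of_nonneg_left hy.le hb
          have : a * m + b * m = m := by rw [← add_mul, hab, one_mul]
          linarith
      have hdisj : Disjoint s (cube0 ψ τ) := by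
        rw [Set.disjoint_left]
        intro x hx hx2
        have h9 := isMinOn_iff.mp hmin x hx2
        simp only [hsdef, Set.mem_setOf_eq] at hx
        rw [← hmdef] at h9
        linarith
      obtain ⟨φ, c, hφ1, hφ2⟩ :=
        geometric_hahn_banach_open hsconv hsopen (cube0Convex ψ τ) hdisj
      -- φ p = c
      have hφpc : φ p = c := by
        refine le_antisymm ?_ (hφ2 p hp)
        have hlim : Filter.Tendsto (fun t : ℝ => φ (u + t • (p - u))) (nhdsWithin 1 (Set.Iio 1))
            (nhds (φ (u + (1:ℝ) • (p - u)))) := by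
          apply Filter.Tendsto.mono_left _ nhdsWithin_le_nhds
          exact (Continuous.tendsto (by continuity) 1)
        have hval : φ (u + (1:ℝ) • (p - u)) = φ p := by
          congr 1; rw [one_smul]; abel
        rw [hval] at hlim
        refine le_of_tendsto hlim ?_
        filter_upwards [Ioo_mem_nhdsLT_of_mem (Set.mem_Ioc.mpr ⟨(by norm_num : (0:ℝ)<1), le_refl 1⟩)] with t ht
        apply le_of_lt
        apply hφ1
        simp only [hsdef, Set.mem_setOf_eq]
        have : u + t • (p - u) - u = t • (p - u) := by abel
        rw [this, hf.smul_eq, abs_of_pos ht.1]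
        calc t * f (p - u) = t * m := by rw [hmdef]
          _ < m := by nlinarith [ht.2]
      -- coordinates of φ off the active set vanish
      have hg0 : ∀ j : Fin N, j ∉ Jset ψ τ p → φ (ψ j) = 0 := by
        intro j hj
        have hpj := (cube0_mem_iff ψ τ p).mp hp j
        have hne1 : ψ.repr p j ≠ τ/2 ∧ ψ.repr p j ≠ -(τ/2) := by
          simp only [Jset, Set.mem_setOf_eq, not_or] at hj; exact hj
        have hlt1 : ψ.repr p j < τ/2 := lt_of_le_of_ne hpj.2 hne1.1
        have hlt2 : -(τ/2) < ψ.repr p j := lt_of_le_of_ne hpj.1 (Ne.symm hne1.2)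
        set t := min (τ/2 - ψ.repr p j) (ψ.repr p j + τ/2) with htdef
        have ht : 0 < t := lt_min (by linarith) (by linarith)
        have key : ∀ r : ℝ, |r| ≤ t → c ≤ c + r * φ (ψ j) := by
          intro r hr
          have hv : p + r • ψ j ∈ cube0 ψ τ := by
            rw [cube0_mem_iff]
            intro i
            by_cases hij : j = i
            · subst hij
              have hrep' : ψ.repr (p + r • ψ j) j = ψ.repr p j + r := by
                simp [map_add, _root_.map_smul, Module.Basis.repr_self]
              rw [hrep']
              have h1 := abs_le.mp hr
              have hle1 : t ≤ τ/2 - ψ.repr p j := min_le_left _ _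
              have hle2 : t ≤ ψ.repr p j + τ/2 := min_le_right _ _
              constructor
              · linarith [h1.1]
              · linarith [h1.2]
            · have hrep' : ψ.repr (p + r • ψ j) i = ψ.repr p i := by
                simp [map_add, _root_.map_smul, Module.Basis.repr_self, Finsupp.single_apply, hij]
              rw [hrep']
              exact (cube0_mem_iff ψ τ p).mp hp i
          have := hφ2 _ hv
          rw [map_add, _root_.map_smul, hφpc] at this
          simpa using this
        have h1 := key t (by rw [abs_of_pos ht])
        have h2 := key (-t) (by rw [abs_neg, abs_of_pos ht])
        nlinarith
      -- φ (q - p) = 0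
      have hφqp : φ (q - p) = 0 := by
        have hrepr : (q - p) = ∑ j, ψ.repr (q - p) j • ψ j := (ψ.sum_repr _).symm
        rw [hrepr, map_sum]
        apply Finset.sum_eq_zero
        intro j _
        rw [_root_.map_smul]
        by_cases hj : j ∈ Jset ψ τ p
        · rw [he j hj]; simp
        · rw [hg0 j hj]; simp
      -- conclude minimality
      intro v hv
      show f (q - (u + (q - p))) ≤ f (v - (u + (q - p)))
      have hvq : q - (u + (q - p)) = p - u := by abel
      rw [hvq, ← hmdef]
      by_contra hcon
      push_neg at hcon
      have hxs : v - (q - p) ∈ s := by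
        simp only [hsdef, Set.mem_setOf_eq]
        have : v - (q - p) - u = v - (u + (q - p)) := by abel
        rw [this]; exact hcon
      have h1 := hφ1 _ hxs
      have h2 := hφ2 v hv
      rw [map_sub, hφqp] at h1
      simp only [sub_zero] at h1
      linarith
  -- uniqueness
  exact solUnique ψ τ hf (hsol _).1 hq (hsol _).2 hqmin

lemma ucRepr (ψ : Module.Basis (Fin N) ℝ (Euc N)) (τ : ℝ) (u : Euc N) (i : Fin N) :
    ψ.repr (ucOf ψ τ u) i = if i ∈ Jset ψ τ u then ψ.repr u i else 0 := by
  classical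
  rw [ucOf, pJ, map_sum]
  rw [Finsupp.finset_sum_apply]
  rw [Finset.sum_eq_single i]
  · by_cases hi : i ∈ Jset ψ τ u
    · simp [hi, Module.Basis.repr_self]
    · simp [hi]
  · intro j _ hji
    by_cases hj : j ∈ Jset ψ τ u
    · simp [hj, Module.Basis.repr_self, Finsupp.single_apply, hji, hji.symm]
    · simp [hj]
  · intro h; exact absurd (Finset.mem_univ i) h

end AuxProofs

set_option maxHeartbeats 2000000 in
/-- `SSAT({u*},(0,τ'])` is nonempty, bounded, and is the translate by
`u* - u^c` of `SSAT({u^c},(0,τ'])`, where `u^c` is the center of the face of `u*`. -/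
theorem stmt6 {N : ℕ} (hN : 1 ≤ N) (ψ : Module.Basis (Fin N) ℝ (Euc N)) (τ : ℝ) (hτ : 0 < τ)
    (f : Euc N → ℝ) (hf : GoodNorm f) (hcurved : Curved f)
    (fd : Euc N → ℝ) (hfd : IsNormLike fd)
    (sol : Euc N → Euc N) (hsol : IsSol ψ τ f sol)
    (τ' : ℝ) (hτ' : 0 < τ')
    (us : Euc N) (hus : us ∈ frontier (cube0 ψ τ)) :
    (SSAT sol fd {us} (Set.Ioc 0 τ')).Nonempty ∧
      Bornology.IsBounded (SSAT sol fd {us} (Set.Ioc 0 τ')) ∧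
      SSAT sol fd {us} (Set.Ioc 0 τ') =
        (fun x => (us - ucOf ψ τ us) + x) '' SSAT sol fd {ucOf ψ τ us} (Set.Ioc 0 τ') := by
  classical
  have hus0 : us ∈ cube0 ψ τ := (cube0Closed ψ τ).frontier_subset hus
  set uc := ucOf ψ τ us with huc
  have hucr : ∀ i, ψ.repr uc i = if i ∈ Jset ψ τ us then ψ.repr us i else 0 :=
    fun i => ucRepr ψ τ us i
  have huc_cube : uc ∈ cube0 ψ τ := by
    rw [cube0_mem_iff]
    intro i
    rw [hucr i]
    by_cases hi : i ∈ Jset ψ τ us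
    · simp only [if_pos hi]; exact (cube0_mem_iff ψ τ us).mp hus0 i
    · simp only [if_neg hi]; constructor <;> linarith
  have hJuc_sub : Jset ψ τ uc ⊆ Jset ψ τ us := by
    intro j hj
    by_contra hjn
    have h0 : ψ.repr uc j = 0 := by rw [hucr j, if_neg hjn]
    rcases hj with h | h <;> rw [h0] at h <;> linarith
  have hJd : ∀ j ∈ Jset ψ τ uc, ψ.repr (us - uc) j = 0 := by
    intro j hj
    have hjus := hJuc_sub hj
    rw [map_sub, Finsupp.sub_apply, hucr j, if_pos hjus, sub_self]
  have hJd' : ∀ j ∈ Jset ψ τ us, ψ.repr (uc - us) j = 0 := by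
    intro j hj
    rw [map_sub, Finsupp.sub_apply, hucr j, if_pos hj, sub_self]
  have fcont : Continuous f := nlContinuous ψ hf.add_le hf.smul_eq
  -- an active coordinate of us
  have hexJ : ∃ i, i ∈ Jset ψ τ us := by
    by_contra hni
    push_neg at hni
    have hfro : us ∉ interior (cube0 ψ τ) := hus.2
    apply hfro
    have hUo : IsOpen (⋂ i, (fun u : Euc N => ψ.repr u i) ⁻¹' Set.Ioo (-(τ/2)) (τ/2)) :=
      isOpen_iInter_of_finite fun i => (isOpen_Ioo).preimage (coordContinuous ψ i)
    apply interior_maximal _ hUo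
    · apply Set.mem_iInter.mpr
      intro i
      have hb := (cube0_mem_iff ψ τ us).mp hus0 i
      have hni' := hni i
      simp only [Jset, Set.mem_setOf_eq, not_or] at hni'
      exact ⟨lt_of_le_of_ne hb.1 (Ne.symm hni'.2), lt_of_le_of_ne hb.2 hni'.1⟩
    · intro x hx
      rw [cube0_mem_iff]
      intro i
      have := Set.mem_iInter.mp hx i
      exact ⟨this.1.le, this.2.le⟩
  obtain ⟨i, hJi⟩ := hexJ
  set ε : ℝ := if ψ.repr us i = τ/2 then 1 else -1 with hεdef
  have hε2 : ε = 1 ∨ ε = -1 := by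
    by_cases h : ψ.repr us i = τ/2 <;> simp [hεdef, h]
  have hεus : ε * ψ.repr us i = τ/2 := by
    rcases hJi with h | h
    · rw [hεdef, if_pos h, one_mul, h]
    · have hne : ψ.repr us i ≠ τ/2 := by rw [h]; intro hc; linarith
      rw [hεdef, if_neg hne, h]; ring
  set L : Euc N →ₗ[ℝ] ℝ := ε • ψ.coord i with hLdef
  have hLapp : ∀ x, L x = ε * ψ.repr x i := by
    intro x; simp [hLdef, Module.Basis.coord_apply]
  have hLcont : Continuous L := L.continuous_of_finiteDimensional
  have hLv : ∀ v ∈ cube0 ψ τ, L v ≤ τ/2 := by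
    intro v hv
    have hb := (cube0_mem_iff ψ τ v).mp hv i
    rw [hLapp]
    rcases hε2 with h | h <;> rw [h] <;> nlinarith [hb.1, hb.2]
  have hLus : L us = τ/2 := by rw [hLapp]; exact hεus
  -- the unit ball of f is compact
  obtain ⟨cl, hcl, hclle⟩ := nlLower hN ψ hf.add_le hf.smul_eq hf.eq_zero_iff
  set B := {x : Euc N | f x ≤ 1} with hBdef
  have hBclosed : IsClosed B := isClosed_le fcont continuous_const
  have hBsub : B ⊆ Metric.closedBall 0 (1/cl) := by
    intro x hx
    rw [Metric.mem_closedBall, dist_zero_right]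
    have h1 := hclle x
    have h2 : f x ≤ 1 := hx
    rw [le_div_iff₀ hcl]
    nlinarith
  have hBcomp : IsCompact B :=
    (isCompact_closedBall (0 : Euc N) (1/cl)).of_isClosed_subset hBclosed hBsub
  have hBne : B.Nonempty := ⟨0, by simp [hBdef, nlZero hf.smul_eq]⟩
  obtain ⟨w0, hw0B, hw0max⟩ := hBcomp.exists_isMaxOn hBne hLcont.continuousOn
  set c0 := L w0 with hc0def
  have hψne : ψ i ≠ 0 := ψ.ne_zero i
  have hfψ : 0 < f (ψ i) := by
    rcases lt_or_eq_of_le (nlNonneg hf.add_le hf.smul_eq (ψ i)) with h | h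
    · exact h
    · exact absurd ((hf.eq_zero_iff _).mp h.symm) hψne
  have hc0pos : 0 < c0 := by
    set z := (ε * (f (ψ i))⁻¹) • ψ i with hzdef
    have hεabs : |ε| = 1 := by rcases hε2 with h | h <;> simp [h]
    have hfz : f z = 1 := by
      rw [hzdef, hf.smul_eq, abs_mul, hεabs, one_mul,
        abs_of_pos (inv_pos.mpr hfψ), inv_mul_cancel₀ (ne_of_gt hfψ)]
    have hzB : z ∈ B := by simp [hBdef, hfz]
    have hLz : L z = (f (ψ i))⁻¹ := by
      rw [hLapp, hzdef]
      have : ψ.repr ((ε * (f (ψ i))⁻¹) • ψ i) i = ε * (f (ψ i))⁻¹ := by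
        simp [_root_.map_smul, Module.Basis.repr_self]
      rw [this]
      rcases hε2 with h | h <;> rw [h] <;> ring
    have := isMaxOn_iff.mp hw0max z hzB
    rw [hLz] at this
    calc (0:ℝ) < (f (ψ i))⁻¹ := inv_pos.mpr hfψ
      _ ≤ L w0 := this
  have hLle : ∀ x, L x ≤ c0 * f x := by
    intro x
    rcases eq_or_ne x 0 with rfl | hx
    · simp [nlZero hf.smul_eq]
    · have hfx : 0 < f x := by
        rcases lt_or_eq_of_le (nlNonneg hf.add_le hf.smul_eq x) with h | h
        · exact h
        · exact absurd ((hf.eq_zero_iff _).mp h.symm) hx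
      have hyB : (f x)⁻¹ • x ∈ B := by
        simp only [hBdef, Set.mem_setOf_eq]
        rw [hf.smul_eq, abs_of_pos (inv_pos.mpr hfx), inv_mul_cancel₀ (ne_of_gt hfx)]
      have h1 := isMaxOn_iff.mp hw0max _ hyB
      rw [_root_.map_smul, smul_eq_mul] at h1
      calc L x = f x * ((f x)⁻¹ * L x) := by field_simp
        _ ≤ f x * c0 := by
          apply mul_le_mul_of_nonneg_left _ hfx.le
          exact h1
        _ = c0 * f x := mul_comm _ _
  have hw0ne : w0 ≠ 0 := by
    intro h
    rw [hc0def, h, map_zero] at hc0pos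
    exact lt_irrefl 0 hc0pos
  have hfdw0 : 0 < fd w0 := by
    rcases lt_or_eq_of_le (nlNonneg hfd.add_le hfd.smul_eq w0) with h | h
    · exact h
    · exact absurd ((hfd.eq_zero_iff _).mp h.symm) hw0ne
  set s0 := τ' / fd w0 with hs0def
  have hs0 : 0 < s0 := div_pos hτ' hfdw0
  set u0 := us + s0 • w0 with hu0def
  have husmin : IsMinOn (fun v => f (v - u0)) (cube0 ψ τ) us := by
    rw [isMinOn_iff]
    intro v hv
    show f (us - u0) ≤ f (v - u0)
    have hval : f (us - u0) = s0 * f w0 := by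
      have : us - u0 = (-s0) • w0 := by rw [hu0def]; module
      rw [this, hf.smul_eq, abs_neg, abs_of_pos hs0]
    have hw0f : f w0 ≤ 1 := hw0B
    have hlow : s0 ≤ f (v - u0) := by
      have h1 : L (u0 - v) ≤ c0 * f (u0 - v) := hLle _
      have h2 : L (u0 - v) = L us + s0 * L w0 - L v := by
        rw [hu0def]
        rw [show us + s0 • w0 - v = (us + s0 • w0) - v from rfl]
        rw [map_sub, map_add, _root_.map_smul, smul_eq_mul]
      have h3 : L v ≤ τ/2 := hLv v hv
      have h4 : s0 * c0 ≤ L (u0 - v) := by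
        rw [h2, hLus, hc0def]; linarith
      have h5 : f (u0 - v) = f (v - u0) := by
        rw [show u0 - v = -(v - u0) by abel, nlNeg hf.smul_eq]
      rw [h5] at h1
      have h6 : s0 * c0 ≤ c0 * f (v - u0) := le_trans h4 h1
      nlinarith
    rw [hval]
    nlinarith [nlNonneg hf.add_le hf.smul_eq w0]
  have hsolu0 : sol u0 = us :=
    solUnique ψ τ hf (hsol u0).1 hus0 (hsol u0).2 husmin
  have hfdu0 : fd (u0 - us) = τ' := by
    have : u0 - us = s0 • w0 := by rw [hu0def]; abel
    rw [this, hfd.smul_eq, abs_of_pos hs0, hs0def]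
    field_simp
  refine ⟨⟨u0, ?_⟩, ?_, ?_⟩
  · -- nonempty
    constructor
    · rw [Set.mem_singleton_iff]; exact hsolu0
    · rw [hsolu0, hfdu0]; exact ⟨hτ', le_refl _⟩
  · -- bounded
    obtain ⟨cd, hcd, hcdle⟩ := nlLower hN ψ hfd.add_le hfd.smul_eq hfd.eq_zero_iff
    have hsub : SSAT sol fd {us} (Set.Ioc 0 τ') ⊆ Metric.closedBall us (τ'/cd) := by
      rintro u ⟨h1, h2⟩
      rw [Set.mem_singleton_iff] at h1
      rw [h1] at h2
      rw [Metric.mem_closedBall, dist_eq_norm]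
      have h3 := hcdle (u - us)
      have h4 : fd (u - us) ≤ τ' := h2.2
      rw [le_div_iff₀ hcd]
      nlinarith
    exact (Metric.isBounded_closedBall).subset hsub
  · -- translation
    ext u'
    simp only [SSAT, Set.mem_setOf_eq, Set.mem_singleton_iff, Set.mem_image]
    constructor
    · rintro ⟨h1, h2⟩
      have hkey := solTranslate ψ hτ hf hsol huc_cube h1 hJd'
      have heq : u' + (uc - us) = u' - (us - uc) := by abel
      rw [heq] at hkey
      refine ⟨u' - (us - uc), ⟨hkey, ?_⟩, by abel⟩
      rw [hkey]
      have heq2 : u' - (us - uc) - uc = u' - us := by abel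
      rw [heq2, ← h1]
      exact h2
    · rintro ⟨w, ⟨hw1, hw2⟩, rfl⟩
      have hkey := solTranslate ψ hτ hf hsol hus0 hw1 hJd
      have heq : w + (us - uc) = us - uc + w := by abel
      rw [heq] at hkey
      refine ⟨hkey, ?_⟩
      rw [hkey]
      have heq2 : us - uc + w - us = w - uc := by abel
      rw [heq2]
      rw [hw1] at hw2
      exact hw2
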